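/- For all integers d ≥ 1, n ≥ 1 and k ≥ 0: Σ_{i=0}^{k} (−1)^i · C(d+1,i) · (n(k−i)+1)^d = d! · n^d · B_{d+1}(k + 1/n), where B_{d+1} is the cardinal B-spline of order d+1. -/

import Mathlib

open MeasureTheory Real Filter Finset


noncomputable def Tpow : ℕ → ℝ → ℝ
  | 0, x => if 0 < x then 1 else 0
  | (m+1), x => max x 0 ^ (m+1)

lemma Tpow_continuous (m : ℕ) : Continuous (Tpow (m+1)) := by
  show Continuous fun x : ℝ => max x 0 ^ (m+1)
  exact (continuous_id.max continuous_const).pow _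

lemma hasDerivAt_maxpow (m : ℕ) (y : ℝ) :
    HasDerivAt (fun t : ℝ => max t 0 ^ (m+2)) ((m+2 : ℝ) * max y 0 ^ (m+1)) y := by
  rcases lt_trichotomy y 0 with h | h | h
  · have h0 : ((m+2 : ℝ)) * max y 0 ^ (m+1) = 0 := by
      rw [max_eq_right h.le]; simp
    rw [h0]
    apply (hasDerivAt_const y (0:ℝ)).congr_of_eventuallyEq
    filter_upwards [Iio_mem_nhds h] with t (ht : t < 0)
    simp [max_eq_right ht.le]
  · subst h
    have h0 : ((m+2 : ℝ)) * max (0:ℝ) 0 ^ (m+1) = 0 := by simp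
    rw [h0, hasDerivAt_iff_tendsto_slope]
    apply squeeze_zero_norm (a := fun t : ℝ => |t| ^ (m+1))
    · intro t
      rcases le_or_gt t 0 with ht | ht
      · simp [slope, max_eq_right ht]
      · simp only [slope, max_self, sub_zero, smul_eq_mul]
        rw [max_eq_left ht.le]
        rw [vsub_eq_sub, zero_pow (by omega : m+2 ≠ 0), sub_zero]
        have : t⁻¹ * t ^ (m+2) = t ^ (m+1) := by
          field_simp
          ring
        rw [this, Real.norm_eq_abs, abs_pow]
    · have : Tendsto (fun t : ℝ => |t| ^ (m+1)) (nhds 0) (nhds 0) := by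
        have := ((continuous_abs.pow (m+1)).tendsto (0:ℝ))
        convert this using 2 <;> simp [Pi.pow_apply]
      exact this.mono_left nhdsWithin_le_nhds
  · have h0 : ((m+2 : ℝ)) * max y 0 ^ (m+1) = (m+2 : ℝ) * y ^ (m+1) := by
      rw [max_eq_left h.le]
    rw [h0]
    have hd : HasDerivAt (fun t : ℝ => t ^ (m+2)) ((m+2 : ℝ) * y ^ (m+1)) y := by
      simpa using hasDerivAt_pow (m+2) y
    apply hd.congr_of_eventuallyEq
    filter_upwards [Ioi_mem_nhds h] with t (ht : 0 < t)
    simp [max_eq_left ht.le]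


lemma integrableOn_Tpow (m : ℕ) (a x : ℝ) :
    IntegrableOn (fun y => Tpow m (y - a)) (Set.Ioc (x-1) x) := by
  cases m with
  | zero =>
    have heq : (fun y : ℝ => Tpow 0 (y - a)) = Set.indicator (Set.Ioi a) (fun _ => (1:ℝ)) := by
      funext y
      simp only [Tpow, Set.indicator, Set.mem_Ioi, sub_pos]
    rw [heq]
    have hc : IntegrableOn (fun _ : ℝ => (1:ℝ)) (Set.Ioc (x-1) x) :=
      integrableOn_const (by rw [Real.volume_Ioc]; exact ENNReal.ofReal_ne_top)
    exact hc.indicator measurableSet_Ioi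
  | succ m =>
    have : Continuous fun y : ℝ => Tpow (m+1) (y - a) := by
      show Continuous fun y : ℝ => max (y - a) 0 ^ (m+1)
      exact ((continuous_id.sub continuous_const).max continuous_const).pow _
    exact this.integrableOn_Ioc

lemma integral_Tpow_zero (a x : ℝ) :
    ∫ y in Set.Ioc (x-1) x, Tpow 0 (y - a) =
      (Tpow 1 (x-a) - Tpow 1 (x-1-a)) / 1 := by
  have heq : (fun y : ℝ => Tpow 0 (y - a)) = Set.indicator (Set.Ioi a) (fun _ => (1:ℝ)) := by
    funext y
    simp only [Tpow, Set.indicator, Set.mem_Ioi, sub_pos]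
  rw [heq, setIntegral_indicator measurableSet_Ioi, setIntegral_const, Set.Ioc_inter_Ioi,
    measureReal_def, Real.volume_Ioc]
  show (ENNReal.ofReal (x - (x - 1) ⊔ a)).toReal • (1:ℝ) = (max (x-a) 0 ^ 1 - max (x-1-a) 0 ^ 1) / 1
  rw [smul_eq_mul, mul_one]
  rcases le_total a (x-1) with h1 | h1
  · rw [sup_of_le_left h1, ENNReal.toReal_ofReal (by linarith)]
    rw [max_eq_left (by linarith), max_eq_left (by linarith)]
    ring
  · rw [sup_of_le_right h1]
    rcases le_total a x with h2 | h2
    · rw [ENNReal.toReal_ofReal (by linarith), max_eq_left (by linarith),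
        max_eq_right (by linarith)]
      ring
    · rw [ENNReal.ofReal_of_nonpos (by linarith), max_eq_right (by linarith),
        max_eq_right (by linarith)]
      simp

lemma integral_Tpow (m : ℕ) (a x : ℝ) :
    ∫ y in Set.Ioc (x-1) x, Tpow m (y - a) =
      (Tpow (m+1) (x-a) - Tpow (m+1) (x-1-a)) / (m+1) := by
  cases m with
  | zero => simpa using integral_Tpow_zero a x
  | succ m =>
    have h1 : x - 1 ≤ x := by linarith
    rw [← intervalIntegral.integral_of_le h1]
    have hcont : Continuous fun y : ℝ => Tpow (m+1) (y - a) := by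
      show Continuous fun y : ℝ => max (y - a) 0 ^ (m+1)
      exact ((continuous_id.sub continuous_const).max continuous_const).pow _
    have hderiv : ∀ y ∈ Set.uIcc (x-1) x,
        HasDerivAt (fun y : ℝ => max (y - a) 0 ^ (m+2) / (m+2 : ℝ)) (Tpow (m+1) (y - a)) y := by
      intro y _
      have h := ((hasDerivAt_maxpow m (y - a)).comp y ((hasDerivAt_id y).sub_const a)).div_const
        ((m:ℝ)+2)
      refine h.congr_deriv (Eq.symm ?_)
      show max (y - a) 0 ^ (m+1) = ((m:ℝ)+2) * max (y-a) 0 ^ (m+1) * 1 / ((m:ℝ)+2)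
      have : ((m:ℝ)+2) ≠ 0 := by positivity
      field_simp
    rw [intervalIntegral.integral_eq_sub_of_hasDerivAt hderiv (hcont.intervalIntegrable _ _)]
    simp only [Tpow]
    push_cast
    ring


/-- The cardinal B-spline of order `d`: `B_1` is the indicator of `[0,1)`,
and `B_d = B_1 * B_{d-1}` (convolution) for `d ≥ 2`. -/
noncomputable def Bspline : ℕ → ℝ → ℝ
  | 0, _ => 0
  | 1, x => if 0 ≤ x ∧ x < 1 then 1 else 0
  | (d + 2), x => ∫ y : ℝ, (if 0 ≤ x - y ∧ x - y < 1 then (1 : ℝ) else 0) * Bspline (d + 1) y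


lemma bspline_succ (d : ℕ) (x : ℝ) :
    Bspline (d+2) x = ∫ y in Set.Ioc (x-1) x, Bspline (d+1) y := by
  show (∫ y : ℝ, (if 0 ≤ x - y ∧ x - y < 1 then (1:ℝ) else 0) * Bspline (d+1) y) = _
  rw [← integral_indicator measurableSet_Ioc]
  congr 1
  funext y
  rw [Set.indicator_apply]
  have hiff : (y ∈ Set.Ioc (x-1) x) ↔ (0 ≤ x - y ∧ x - y < 1) := by
    simp only [Set.mem_Ioc]
    constructor <;> rintro ⟨h1, h2⟩ <;> constructor <;> linarith
  by_cases h : y ∈ Set.Ioc (x-1) x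
  · rw [if_pos h, if_pos (hiff.mp h), one_mul]
  · rw [if_neg h, if_neg (fun hc => h (hiff.mpr hc)), zero_mul]

lemma pascal_sum (m : ℕ) (A : ℕ → ℝ) :
    ∑ i ∈ range (m+3), (-1:ℝ)^i * ((m+2).choose i) * A i =
    ∑ i ∈ range (m+2), (-1:ℝ)^i * ((m+1).choose i) * (A i - A (i+1)) := by
  have h1 : ∀ i : ℕ, (((m+2).choose (i+1) : ℝ)) = ((m+1).choose i : ℝ) + ((m+1).choose (i+1) : ℝ) := by
    intro i
    rw [show m + 2 = (m+1) + 1 from rfl, Nat.choose_succ_succ]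
    push_cast
    ring
  rw [Finset.sum_range_succ' (fun i => (-1:ℝ)^i * ((m+2).choose i) * A i) (m+2)]
  simp only [h1, pow_zero, Nat.choose_zero_right, Nat.cast_one, one_mul]
  have h2 : ∑ i ∈ range (m+2), (-1:ℝ)^i * ((m+1).choose i) * A i
      = A 0 + ∑ i ∈ range (m+2), (-1:ℝ)^(i+1) * ((m+1).choose (i+1)) * A (i+1) := by
    have h3 := Finset.sum_range_succ' (fun i => (-1:ℝ)^i * ((m+1).choose i) * A i) (m+2)
    have h4 : ∑ i ∈ range (m+2+1), (-1:ℝ)^i * ((m+1).choose i) * A i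
        = ∑ i ∈ range (m+2), (-1:ℝ)^i * ((m+1).choose i) * A i := by
      rw [Finset.sum_range_succ]
      have : ((m+1).choose (m+2) : ℝ) = 0 := by
        rw [Nat.choose_eq_zero_of_lt (by omega)]; simp
      rw [this]
      simp
    rw [h4] at h3
    rw [h3]
    simp only [pow_zero, Nat.choose_zero_right, Nat.cast_one, one_mul]
    ring
  have lhs_split : ∑ i ∈ range (m+2),
      (-1:ℝ)^(i+1) * (((m+1).choose i : ℝ) + ((m+1).choose (i+1) : ℝ)) * A (i+1)
      = (∑ i ∈ range (m+2), (-1:ℝ)^(i+1) * ((m+1).choose i) * A (i+1))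
        + ∑ i ∈ range (m+2), (-1:ℝ)^(i+1) * ((m+1).choose (i+1)) * A (i+1) := by
    rw [← Finset.sum_add_distrib]
    apply Finset.sum_congr rfl
    intros; ring
  have rhs_split : ∑ i ∈ range (m+2), (-1:ℝ)^i * ((m+1).choose i) * (A i - A (i+1))
      = (∑ i ∈ range (m+2), (-1:ℝ)^i * ((m+1).choose i) * A i)
        - ∑ i ∈ range (m+2), (-1:ℝ)^i * ((m+1).choose i) * A (i+1) := by
    rw [← Finset.sum_sub_distrib]
    apply Finset.sum_congr rfl
    intros; ring
  rw [lhs_split, rhs_split, h2]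
  have : ∀ s : Finset ℕ, ∑ i ∈ s, (-1:ℝ)^(i+1) * ((m+1).choose i) * A (i+1)
      = - ∑ i ∈ s, (-1:ℝ)^i * ((m+1).choose i) * A (i+1) := by
    intro s; rw [← Finset.sum_neg_distrib]; apply Finset.sum_congr rfl; intros; ring
  rw [this]
  ring

noncomputable def gfun (d : ℕ) (x : ℝ) : ℝ :=
  (d.factorial : ℝ)⁻¹ * ∑ i ∈ range (d+2), (-1:ℝ)^i * ((d+1).choose i : ℝ) * Tpow d (x - i)

lemma bspline_step (d : ℕ) (h : ∀ᵐ y : ℝ, Bspline (d+1) y = gfun d y) (x : ℝ) :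
    Bspline (d+2) x = gfun (d+1) x := by
  rw [bspline_succ]
  rw [setIntegral_congr_ae measurableSet_Ioc (h.mono fun y hy _ => hy)]
  unfold gfun
  rw [MeasureTheory.integral_const_mul]
  have hintg : ∀ i ∈ range (d+2), Integrable
      (fun y : ℝ => (-1:ℝ)^i * ((d+1).choose i : ℝ) * Tpow d (y - i))
      (volume.restrict (Set.Ioc (x-1) x)) :=
    fun i _ => (integrableOn_Tpow d i x).const_mul ((-1:ℝ)^i * ((d+1).choose i : ℝ))
  rw [integral_finset_sum _ hintg]
  have hint : ∀ i ∈ range (d+2),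
      (∫ y in Set.Ioc (x-1) x, (-1:ℝ)^i * ((d+1).choose i : ℝ) * Tpow d (y - i))
      = (-1:ℝ)^i * ((d+1).choose i : ℝ) *
          ((Tpow (d+1) (x - i) - Tpow (d+1) (x - (i+1 : ℕ))) / (d+1)) := by
    intro i _
    rw [MeasureTheory.integral_const_mul, integral_Tpow]
    congr 2
    push_cast
    ring
  rw [Finset.sum_congr rfl hint]
  have hps := pascal_sum d (fun i => Tpow (d+1) (x - i))
  have hsum : ∑ i ∈ range (d+2), (-1:ℝ)^i * ((d+1).choose i : ℝ) *
      ((Tpow (d+1) (x - i) - Tpow (d+1) (x - (i+1 : ℕ))) / (d+1))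
      = (↑(d+1) : ℝ)⁻¹ * ∑ i ∈ range (d+3), (-1:ℝ)^i * ((d+2).choose i : ℝ) * Tpow (d+1) (x - i) := by
    rw [hps, Finset.mul_sum]
    apply Finset.sum_congr rfl
    intro i _
    push_cast
    field_simp
  rw [hsum]
  rw [← mul_assoc]
  congr 1
  rw [Nat.factorial_succ]
  push_cast
  rw [mul_inv]
  ring

lemma bspline_ae (d : ℕ) : ∀ᵐ y : ℝ, Bspline (d+1) y = gfun d y := by
  induction d with
  | zero =>
    have hsub : {y : ℝ | ¬ Bspline 1 y = gfun 0 y} ⊆ ({0, 1} : Set ℝ) := by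
      intro y hy
      by_contra hmem
      apply hy
      simp only [Set.mem_insert_iff, Set.mem_singleton_iff, not_or] at hmem
      obtain ⟨h0, h1⟩ := hmem
      show (if 0 ≤ y ∧ y < 1 then (1:ℝ) else 0) = gfun 0 y
      unfold gfun
      simp only [Nat.factorial_zero, Nat.cast_one, inv_one, one_mul]
      rw [Finset.sum_range_succ, Finset.sum_range_succ, Finset.sum_range_zero]
      simp only [pow_zero, pow_one, Nat.choose_zero_right, Nat.choose_one_right,
        Nat.cast_one, Nat.cast_zero, Nat.cast_ofNat, one_mul, zero_add]
      show (if 0 ≤ y ∧ y < 1 then (1:ℝ) else 0) =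
        (if 0 < y - 0 then (1:ℝ) else 0) + -1 * 1 * (if 0 < y - 1 then (1:ℝ) else 0)
      rw [sub_zero]
      rcases lt_trichotomy y 0 with h | h | h
      · rw [if_neg (by push_neg; intro h'; linarith), if_neg (by linarith),
          if_neg (by linarith)]
        ring
      · exact absurd h h0
      · rcases lt_trichotomy y 1 with h2 | h2 | h2
        · rw [if_pos ⟨h.le, h2⟩, if_pos h, if_neg (by linarith)]
          ring
        · exact absurd h2 h1
        · rw [if_neg (by push_neg; intro h'; linarith), if_pos h, if_pos (by linarith)]
          ring
    rw [MeasureTheory.ae_iff]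
    apply measure_mono_null hsub
    exact ((Set.finite_singleton (1:ℝ)).insert 0).countable.measure_zero volume
  | succ d ih =>
    exact Filter.Eventually.of_forall (bspline_step d ih)

lemma bspline_formula (d : ℕ) (x : ℝ) : Bspline (d+2) x = gfun (d+1) x :=
  bspline_step d (bspline_ae d) x

theorem descent_number_eq_bspline (d n k : ℕ) (hd : 1 ≤ d) (hn : 1 ≤ n) :
    ∑ i ∈ Finset.range (k + 1),
        (-1 : ℝ) ^ i * ((d + 1).choose i : ℝ) * ((n : ℝ) * ((k : ℝ) - (i : ℝ)) + 1) ^ d =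
      (d.factorial : ℝ) * (n : ℝ) ^ d * Bspline (d + 1) ((k : ℝ) + 1 / (n : ℝ)) := by
  obtain ⟨m, rfl⟩ : ∃ m, d = m + 1 := ⟨d - 1, by omega⟩
  have hnpos : (0:ℝ) < (n:ℝ) := by exact_mod_cast Nat.cast_pos.mpr hn
  have hn1 : (1:ℝ) ≤ (n:ℝ) := by exact_mod_cast hn
  set x : ℝ := (k:ℝ) + 1/(n:ℝ) with hx
  have hB : Bspline (m+1+1) x = gfun (m+1) x := bspline_formula m x
  rw [hB]
  unfold gfun
  set d := m + 1 with hdm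
  have hfac : ((d.factorial : ℝ)) ≠ 0 := by
    exact_mod_cast d.factorial_ne_zero
  rw [show (d.factorial : ℝ) * (n:ℝ)^d * ((d.factorial : ℝ)⁻¹ *
      ∑ i ∈ range (d+2), (-1:ℝ)^i * ((d+1).choose i : ℝ) * Tpow d (x - i))
      = ∑ i ∈ range (d+2), (n:ℝ)^d * ((-1:ℝ)^i * ((d+1).choose i : ℝ) * Tpow d (x - i)) by
    rw [Finset.mul_sum, Finset.mul_sum]
    apply Finset.sum_congr rfl
    intro i _
    field_simp]
  have hsubL : range (min (k+1) (d+2)) ⊆ range (k+1) := by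
    apply Finset.range_subset_range.mpr; omega
  have hsubR : range (min (k+1) (d+2)) ⊆ range (d+2) := by
    apply Finset.range_subset_range.mpr; omega
  have hL : ∑ i ∈ range (k+1), (-1:ℝ)^i * ((d+1).choose i : ℝ) * ((n:ℝ) * ((k:ℝ) - i) + 1)^d
      = ∑ i ∈ range (min (k+1) (d+2)), (-1:ℝ)^i * ((d+1).choose i : ℝ) * ((n:ℝ) * ((k:ℝ) - i) + 1)^d := by
    symm
    apply Finset.sum_subset hsubL
    intro i hi hni
    simp only [Finset.mem_range] at hi hni
    have : d + 1 < i := by omega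
    rw [Nat.choose_eq_zero_of_lt this]
    simp
  have hR : ∑ i ∈ range (d+2), (n:ℝ)^d * ((-1:ℝ)^i * ((d+1).choose i : ℝ) * Tpow d (x - i))
      = ∑ i ∈ range (min (k+1) (d+2)), (n:ℝ)^d * ((-1:ℝ)^i * ((d+1).choose i : ℝ) * Tpow d (x - i)) := by
    symm
    apply Finset.sum_subset hsubR
    intro i hi hni
    simp only [Finset.mem_range] at hi hni
    have hik : k + 1 ≤ i := by omega
    have hxi : x - (i:ℝ) ≤ 0 := by
      have : ((k:ℝ)) + 1 ≤ (i:ℝ) := by exact_mod_cast hik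
      have h1n : 1/(n:ℝ) ≤ 1 := by
        rw [div_le_one hnpos]; exact hn1
      rw [hx]; linarith
    have : Tpow d (x - i) = 0 := by
      show max (x - (i:ℝ)) 0 ^ (m+1) = 0
      rw [max_eq_right hxi]
      simp
    rw [this]
    ring
  rw [hL, hR]
  apply Finset.sum_congr rfl
  intro i hi
  simp only [Finset.mem_range, lt_min_iff] at hi
  have hik : (i:ℝ) ≤ (k:ℝ) := by exact_mod_cast Nat.lt_succ_iff.mp hi.1
  have hxi : 0 ≤ x - (i:ℝ) := by
    rw [hx]
    have : 0 < 1/(n:ℝ) := by positivity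
    linarith
  have hT : Tpow d (x - i) = (x - (i:ℝ))^d := by
    show max (x - (i:ℝ)) 0 ^ (m+1) = (x - (i:ℝ))^(m+1)
    rw [max_eq_left hxi]
  rw [hT]
  have hkey : (n:ℝ) * ((k:ℝ) - i) + 1 = (n:ℝ) * (x - i) := by
    rw [hx]
    field_simp
    ring
  rw [hkey, mul_pow]
  ring
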